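/- arXiv:1304.4117 — 2 statements merged into one kernel-verified Lean document; each statement's English description precedes it below -/
import Mathlib

section
/- Let G be a discrete group and let μ be an irreducible probability measure on G. Then there exists k ∈ ℕ, k ≥ 1, such that the total variation norms ‖μ^{⋆(n+k)} − μ^{⋆n}‖₁ = Σ_{g∈G} |μ^{⋆(n+k)}({g}) − μ^{⋆n}({g})| converge to 0 as n → ∞. -/
open Filter Topology
open scoped Classical

variable {G : Type*}

/-- Convolution of two summable "measures" (functions) on a discrete group:
`(ν ⋆ μ)(g) = ∑_{a·b=g} ν(a) μ(b)`. -/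
noncomputable def mconv [Group G] (ν μ : G → ℝ) : G → ℝ :=
  fun g => ∑' a : G, ν a * μ (a⁻¹ * g)

/-- The `n`-th convolution power of `μ`, with `convPow μ 0 = δ_e` and `convPow μ 1 = μ`. -/
noncomputable def convPow [Group G] (μ : G → ℝ) : ℕ → G → ℝ
  | 0 => fun g => if g = 1 then 1 else 0
  | n + 1 => mconv (convPow μ n) μ

/-- `μ` is a probability measure on the discrete group `G`. -/
def IsProbMeas [Group G] (μ : G → ℝ) : Prop :=
  (∀ g, 0 ≤ μ g) ∧ HasSum μ 1

/-- `μ` is irreducible: every point is charged by some convolution power `μ^{⋆n}`, `n ≥ 1`. -/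
def MeasIrreducible [Group G] (μ : G → ℝ) : Prop :=
  ∀ g : G, ∃ n : ℕ, 1 ≤ n ∧ 0 < convPow μ n g

/-- The convolution action of a measure `μ` on a function `f ∈ c₀(G)`:
`(f ⋆ μ)(g) = ∑_h f(g·h) μ(h)`. -/
noncomputable def actConv [Group G] (f : G → ℂ) (μ : G → ℝ) : G → ℂ :=
  fun g => ∑' h : G, f (g * h) * (μ h : ℂ)

/-- A function on a discrete space vanishes at infinity iff it tends to `0`
along the cofinite filter. -/
def ZeroAtInfty (f : G → ℂ) : Prop := Tendsto f cofinite (𝓝 0)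


section ZTL

variable [Group G]

lemma pm_summable {μ : G → ℝ} (h : IsProbMeas μ) : Summable μ := h.2.summable

lemma pm_tsum {μ : G → ℝ} (h : IsProbMeas μ) : ∑' g, μ g = 1 := h.2.tsum_eq

lemma pm_le_one {μ : G → ℝ} (h : IsProbMeas μ) (g : G) : μ g ≤ 1 :=
  le_hasSum h.2 g (fun i _ => h.1 i)

lemma summable_shift {μ : G → ℝ} (h : Summable μ) (a : G) :
    Summable fun b => μ (a * b) :=
  h.comp_injective (mul_right_injective a)

lemma hasSum_shift {μ : G → ℝ} {s : ℝ} (h : HasSum μ s) (a : G) :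
    HasSum (fun b => μ (a * b)) s :=
  (Equiv.mulLeft a).hasSum_iff.2 (by simpa using h)

/-- key summability on the product for convolution of prob measures -/
lemma summable_F {ν μ : G → ℝ} (hν : IsProbMeas ν) (hμ : IsProbMeas μ) :
    Summable (fun p : G × G => ν p.1 * μ (p.1⁻¹ * p.2)) := by
  refine (summable_prod_of_nonneg ?_).2 ⟨?_, ?_⟩
  · intro p; exact mul_nonneg (hν.1 _) (hμ.1 _)
  · intro a
    exact ((summable_shift (pm_summable hμ) a⁻¹).mul_left (ν a))
  · apply Summable.of_nonneg_of_le (fun a => tsum_nonneg (fun b => mul_nonneg (hν.1 _) (hμ.1 _)))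
      (fun a => ?_) (pm_summable hν)
    dsimp only
    rw [tsum_mul_left, (hasSum_shift hμ.2 a⁻¹).tsum_eq, mul_one]

lemma hasSum_fiber {ν μ : G → ℝ} (hμ : IsProbMeas μ) (a : G) :
    HasSum (fun g => ν a * μ (a⁻¹ * g)) (ν a) := by
  simpa using (hasSum_shift hμ.2 a⁻¹).mul_left (ν a)

lemma isProbMeas_mconv {ν μ : G → ℝ} (hν : IsProbMeas ν) (hμ : IsProbMeas μ) :
    IsProbMeas (mconv ν μ) := by
  constructor
  · intro g; exact tsum_nonneg (fun a => mul_nonneg (hν.1 _) (hμ.1 _))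
  · have hF := summable_F hν hμ
    have htot : HasSum (fun p : G × G => ν p.1 * μ (p.1⁻¹ * p.2)) 1 := by
      have h := hF.hasSum
      rwa [Summable.tsum_prod' hF (fun a => (hasSum_fiber (ν := ν) hμ a).summable),
        tsum_congr (fun a => (hasSum_fiber (ν := ν) hμ a).tsum_eq), pm_tsum hν] at h
    have hswap : HasSum (fun p : G × G => ν p.2 * μ (p.2⁻¹ * p.1)) 1 := by
      have h := (Equiv.prodComm G G).hasSum_iff.2 htot
      simpa [Function.comp_def] using h
    exact hswap.prod_fiberwise (fun g => (hswap.summable.prod_factor g).hasSum)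

end ZTL

noncomputable def mdelta [Group G] : G → ℝ := fun g => if g = 1 then 1 else 0

section ZTL2

variable [Group G]

lemma convPow_zero (μ : G → ℝ) : convPow μ 0 = mdelta := rfl

lemma convPow_succ (μ : G → ℝ) (n : ℕ) : convPow μ (n + 1) = mconv (convPow μ n) μ := rfl

lemma isProbMeas_mdelta : IsProbMeas (mdelta : G → ℝ) := by
  constructor
  · intro g; unfold mdelta; split <;> norm_num
  · exact hasSum_ite_eq 1 1

lemma mconv_mdelta_right (f : G → ℝ) : mconv f mdelta = f := by
  funext g
  unfold mconv mdelta
  rw [tsum_eq_single g]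
  · simp
  · intro b hb
    simp [inv_mul_eq_one, hb]

lemma isProbMeas_convPow {μ : G → ℝ} (h : IsProbMeas μ) (n : ℕ) :
    IsProbMeas (convPow μ n) := by
  induction n with
  | zero => exact isProbMeas_mdelta
  | succ n ih => exact isProbMeas_mconv ih h

lemma mconv_assoc {ν μ σ : G → ℝ} (hν : IsProbMeas ν) (hμ : IsProbMeas μ)
    (hσ : IsProbMeas σ) : mconv (mconv ν μ) σ = mconv ν (mconv μ σ) := by
  funext g
  set F : G → G → ℝ := fun b a => ν a * μ (a⁻¹ * b) * σ (b⁻¹ * g) with hFdef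
  have hF0 : ∀ b a, 0 ≤ F b a := fun b a =>
    mul_nonneg (mul_nonneg (hν.1 _) (hμ.1 _)) (hσ.1 _)
  have h1 : ∀ b, Summable (F b) := by
    intro b
    exact ((summable_F hν hμ).prod_symm.prod_factor b).mul_right _
  have h2 : ∀ a, Summable fun b => F b a := by
    intro a
    apply Summable.of_nonneg_of_le (fun b => hF0 b a) (fun b => ?_)
      (((summable_shift (pm_summable hμ) a⁻¹).mul_left (ν a)))
    calc F b a ≤ ν a * μ (a⁻¹ * b) * 1 := by
          exact mul_le_mul_of_nonneg_left (pm_le_one hσ _) (mul_nonneg (hν.1 _) (hμ.1 _))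
      _ = ν a * μ (a⁻¹ * b) := mul_one _
  have hmm : IsProbMeas (mconv ν μ) := isProbMeas_mconv hν hμ
  have hmarg : ∀ b, ∑' a, F b a = mconv ν μ b * σ (b⁻¹ * g) := by
    intro b; rw [hFdef]; exact tsum_mul_right
  have hunc : Summable (Function.uncurry F) := by
    refine (summable_prod_of_nonneg (fun p => hF0 p.1 p.2)).2 ⟨h1, ?_⟩
    apply Summable.of_nonneg_of_le
      (fun b => tsum_nonneg (hF0 b)) (fun b => ?_) (pm_summable hmm)
    rw [hmarg b]
    calc mconv ν μ b * σ (b⁻¹ * g) ≤ mconv ν μ b * 1 :=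
          mul_le_mul_of_nonneg_left (pm_le_one hσ _) (hmm.1 _)
      _ = mconv ν μ b := mul_one _
  have hcomm : ∑' a, ∑' b, F b a = ∑' b, ∑' a, F b a := Summable.tsum_comm' hunc h1 h2
  have hL : mconv (mconv ν μ) σ g = ∑' b, ∑' a, F b a := by
    unfold mconv
    exact tsum_congr (fun b => (hmarg b).symm)
  have hR : ∀ a, ∑' b, F b a = ν a * mconv μ σ (a⁻¹ * g) := by
    intro a
    rw [← (Equiv.mulLeft a).tsum_eq (fun b => F b a)]
    unfold mconv
    have hpt : ∀ c, F ((Equiv.mulLeft a) c) a = ν a * (μ c * σ (c⁻¹ * (a⁻¹ * g))) := by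
      intro c
      simp [hFdef, mul_assoc, mul_inv_rev]
    rw [tsum_congr hpt, tsum_mul_left]
  rw [hL, ← hcomm]
  unfold mconv
  exact tsum_congr hR

lemma convPow_add {μ : G → ℝ} (h : IsProbMeas μ) (a b : ℕ) :
    convPow μ (a + b) = mconv (convPow μ a) (convPow μ b) := by
  induction b with
  | zero => simp [convPow_zero, mconv_mdelta_right]
  | succ b ih =>
      rw [← Nat.add_assoc, convPow_succ, ih, convPow_succ,
        mconv_assoc (isProbMeas_convPow h a) (isProbMeas_convPow h b) h]

end ZTL2
section Binom
open Finset

/-- binomial weight `C(m,j) q^j (1-q)^(m-j)` -/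
noncomputable def Bco (q : ℝ) (m j : ℕ) : ℝ :=
  (m.choose j : ℝ) * q ^ j * (1 - q) ^ (m - j)

/-- mode of the binomial distribution -/
noncomputable def jstar (q : ℝ) (m : ℕ) : ℕ := ⌊q * (m + 1)⌋₊

variable {q : ℝ}

lemma Bco_nonneg (hq0 : 0 < q) (hq1 : q < 1) (m j : ℕ) : 0 ≤ Bco q m j := by
  have h1 : (0:ℝ) ≤ 1 - q := by linarith
  unfold Bco; positivity

lemma Bco_gt_eq_zero (m j : ℕ) (h : m < j) : Bco q m j = 0 := by
  unfold Bco; rw [Nat.choose_eq_zero_of_lt h]; simp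

lemma Bco_sum (hq0 : 0 < q) (hq1 : q < 1) (m N : ℕ) (hN : m + 1 ≤ N) :
    ∑ j ∈ range N, Bco q m j = 1 := by
  have h1 : ∑ j ∈ range (m+1), Bco q m j = 1 := by
    have := add_pow q (1-q) m
    simp only [add_sub_cancel, one_pow] at this
    rw [this]
    refine Finset.sum_congr rfl (fun j _ => ?_)
    unfold Bco; ring
  rw [← h1]
  symm
  apply Finset.sum_subset (Finset.range_subset_range.2 hN)
  intro j _ hj
  exact Bco_gt_eq_zero m j (by simpa using hj)

lemma Bco_pascal (hq0 : 0 < q) (hq1 : q < 1) (m j : ℕ) :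
    Bco q (m+1) (j+1) = (1 - q) * Bco q (m) (j+1) + q * Bco q m j := by
  unfold Bco
  rcases lt_trichotomy j m with h | h | h
  · have hms : m - (j+1) + 1 = m - j := by omega
    have hms2 : m + 1 - (j+1) = m - j := by omega
    rw [Nat.choose_succ_succ]
    push_cast
    rw [show m - j = m - (j+1) + 1 from by omega, pow_succ]
    ring
  · subst h
    simp [Nat.choose_succ_self, Nat.choose_self, pow_succ]
    ring
  · rw [Nat.choose_eq_zero_of_lt (by omega), Nat.choose_eq_zero_of_lt (by omega),
      Nat.choose_eq_zero_of_lt (by omega)]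
    simp

lemma Bco_pascal_zero (hq0 : 0 < q) (hq1 : q < 1) (m : ℕ) :
    Bco q (m+1) 0 = (1 - q) * Bco q m 0 := by
  unfold Bco
  simp [pow_succ]
  ring

lemma Bco_ratio (hq0 : 0 < q) (hq1 : q < 1) (m j : ℕ) (hj : j ≤ m) :
    (1 - q) * (j+1) * Bco q m (j+1) = q * ((m:ℝ) - j) * Bco q m j := by
  unfold Bco
  rcases eq_or_lt_of_le hj with rfl | h
  · simp [Nat.choose_succ_self]
  · have hc : ((m.choose (j+1) * (j+1) : ℕ) : ℝ) = ((m.choose j * (m - j) : ℕ) : ℝ) := by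
      rw [Nat.choose_succ_right_eq m j]
    push_cast [Nat.cast_sub hj] at hc
    have hms : m - (j+1) + 1 = m - j := by omega
    calc (1 - q) * (j+1) * ((m.choose (j+1) : ℝ) * q ^ (j+1) * (1-q) ^ (m - (j+1)))
        = ((m.choose (j+1) : ℝ) * (j+1)) * q ^ (j+1) * ((1-q) ^ (m - (j+1)) * (1-q)) := by ring
      _ = ((m.choose j : ℝ) * ((m:ℝ) - j)) * q ^ (j+1) * (1-q) ^ (m - j) := by
          rw [hc, ← pow_succ, hms]
      _ = q * ((m:ℝ) - j) * ((m.choose j : ℝ) * q ^ j * (1-q) ^ (m - j)) := by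
          rw [pow_succ]; ring

lemma Bco_mono_up (hq0 : 0 < q) (hq1 : q < 1) (m j : ℕ)
    (h : (j+1:ℝ) ≤ q * (m+1)) : Bco q m j ≤ Bco q m (j+1) := by
  have hjm : j < m := by
    have : (j+1:ℝ) < (m+1:ℝ) := lt_of_le_of_lt h (by nlinarith [Nat.cast_nonneg (α := ℝ) m])
    exact_mod_cast (by exact_mod_cast Nat.lt_of_succ_lt_succ (by exact_mod_cast this) : j < m)
  have hr := Bco_ratio hq0 hq1 m j hjm.le
  have hB := Bco_nonneg hq0 hq1 m j
  have hcoef : (1-q) * (j+1) ≤ q * ((m:ℝ) - j) := by nlinarith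
  have hpos : (0:ℝ) < (1-q) * (j+1) := by
    have : (0:ℝ) < j+1 := by positivity
    nlinarith
  nlinarith [mul_le_mul_of_nonneg_right hcoef hB]

lemma Bco_mono_down (hq0 : 0 < q) (hq1 : q < 1) (m j : ℕ)
    (h : q * (m+1) ≤ (j+1:ℝ)) : Bco q m (j+1) ≤ Bco q m j := by
  rcases le_or_gt j m with hjm | hjm
  · have hr := Bco_ratio hq0 hq1 m j hjm
    have hB := Bco_nonneg hq0 hq1 m j
    have hmj : (0:ℝ) ≤ (m:ℝ) - j := by
      have : (j:ℝ) ≤ m := by exact_mod_cast hjm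
      linarith
    have hcoef : q * ((m:ℝ) - j) ≤ (1-q) * (j+1) := by nlinarith
    have hpos : (0:ℝ) < (1-q) * (j+1) := by
      have : (0:ℝ) < j+1 := by positivity
      nlinarith
    nlinarith [mul_le_mul_of_nonneg_right hcoef hB]
  · rw [Bco_gt_eq_zero m (j+1) (by omega)]
    exact Bco_nonneg hq0 hq1 m j

lemma jstar_le (hq0 : 0 < q) (m : ℕ) : (jstar q m : ℝ) ≤ q * (m+1) :=
  Nat.floor_le (by positivity)

lemma lt_jstar_add_one (q : ℝ) (m : ℕ) : q * (m+1) < jstar q m + 1 :=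
  Nat.lt_floor_add_one _

/-- one-step lower bound to the right of the mode -/
lemma Bco_step (hq0 : 0 < q) (hq1 : q < 1) (m s : ℕ) :
    (1 - ((s:ℝ)+1) / (q * (1-q) * (m+1))) * Bco q m (jstar q m + s)
      ≤ Bco q m (jstar q m + s + 1) := by
  set j := jstar q m + s with hj
  set D : ℝ := q * (1-q) * (m+1) with hD
  have hq1' : (0:ℝ) < 1 - q := by linarith
  have hDpos : 0 < D := by positivity
  rcases le_or_gt j m with hjm | hjm
  · have hr := Bco_ratio hq0 hq1 m j hjm
    have hB := Bco_nonneg hq0 hq1 m j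
    have hB' := Bco_nonneg hq0 hq1 m (j+1)
    have hx : (jstar q m : ℝ) ≤ q * (m+1) := jstar_le hq0 m
    have hjr : (j:ℝ) = (jstar q m : ℝ) + s := by push_cast [hj]; ring
    have hjm' : (j:ℝ) ≤ m := by exact_mod_cast hjm
    -- coefficient inequality: (1 - (s+1)/D) * ((1-q)*(j+1)) ≤ q*(m - j)
    have hcoef : (1 - ((s:ℝ)+1) / D) * ((1-q) * ((j:ℝ)+1)) ≤ q * ((m:ℝ) - j) := by
      have hrw : (1 - ((s:ℝ)+1) / D) * ((1-q) * ((j:ℝ)+1))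
          = (D * ((1-q) * ((j:ℝ)+1)) - ((s:ℝ)+1) * ((1-q) * ((j:ℝ)+1))) / D := by
        field_simp
      rw [hrw, div_le_iff₀ hDpos]
      have h1 : (1-q) * ((j:ℝ)+1) ≤ D + (1-q) * ((s:ℝ)+1) := by
        rw [hD]; nlinarith [hx, hjr]
      have h2 : D - q * ((s:ℝ)+1) ≤ q * ((m:ℝ) - (j:ℝ)) := by
        rw [hD]; nlinarith [hx, hjr]
      rcases le_or_gt ((s:ℝ)+1) D with hc1 | hc1
      · nlinarith [mul_le_mul_of_nonneg_right h1 (sub_nonneg.2 hc1),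
          mul_le_mul_of_nonneg_left h2 hDpos.le,
          mul_nonneg (mul_nonneg hq1'.le (by positivity : (0:ℝ) ≤ (s:ℝ)+1))
            (by positivity : (0:ℝ) ≤ (s:ℝ)+1)]
      · have hmj : (0:ℝ) ≤ (m:ℝ) - j := by linarith [hjm']
        nlinarith [mul_nonneg (mul_nonneg hq0.le hmj) hDpos.le,
          mul_pos hq1' (by positivity : (0:ℝ) < (j:ℝ)+1)]
    have hpos : (0:ℝ) < (1-q) * ((j:ℝ)+1) := by positivity
    calc (1 - ((s:ℝ)+1) / D) * Bco q m j
        ≤ (q * ((m:ℝ) - j) / ((1-q) * ((j:ℝ)+1))) * Bco q m j := by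
          apply mul_le_mul_of_nonneg_right _ hB
          rw [le_div_iff₀ hpos]
          exact hcoef
      _ = Bco q m (j+1) := by
          rw [div_mul_eq_mul_div, div_eq_iff (ne_of_gt hpos)]
          linarith [hr]
  · rw [Bco_gt_eq_zero m j hjm, mul_zero]
    exact Bco_nonneg hq0 hq1 m (j+1)

end Binom
section Binom2
open Finset

variable {q : ℝ}

/-- accumulated lower bound to the right of the mode -/
lemma Bco_low (hq0 : 0 < q) (hq1 : q < 1) (m t : ℕ)
    (ht : (t:ℝ) * (t+1) / 2 ≤ q * (1-q) * (m+1)) :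
    (1 - ((t:ℝ) * (t+1) / 2) / (q * (1-q) * (m+1))) * Bco q m (jstar q m)
      ≤ Bco q m (jstar q m + t) := by
  set D : ℝ := q * (1-q) * (m+1) with hD
  have hq1' : (0:ℝ) < 1 - q := by linarith
  have hDpos : 0 < D := by positivity
  induction t with
  | zero => simp
  | succ t ih =>
      push_cast
      have htR : ((t:ℝ)+1) * ((t:ℝ)+2) / 2 ≤ D := by push_cast at ht ⊢; linarith
      have ht' : (t:ℝ) * (t+1) / 2 ≤ D := by nlinarith [htR, Nat.cast_nonneg (α := ℝ) t]
      have hstep := Bco_step hq0 hq1 m t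
      have hIH := ih ht'
      have hM := Bco_nonneg hq0 hq1 m (jstar q m)
      have hBt := Bco_nonneg hq0 hq1 m (jstar q m + t)
      have hf1 : (0:ℝ) ≤ 1 - ((t:ℝ)+1) / D := by
        rw [sub_nonneg, div_le_one hDpos]; nlinarith
      have hf2 : (0:ℝ) ≤ 1 - ((t:ℝ) * (t+1) / 2) / D := by
        rw [sub_nonneg, div_le_one hDpos]; linarith
      have chain : (1 - ((t:ℝ)+1) / D) * ((1 - ((t:ℝ) * (t+1) / 2) / D) * Bco q m (jstar q m))
          ≤ Bco q m (jstar q m + t + 1) :=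
        le_trans (mul_le_mul_of_nonneg_left hIH hf1) hstep
      have hco : 1 - (((t:ℝ)+1) * ((t:ℝ)+1+1) / 2) / D
          ≤ (1 - ((t:ℝ)+1) / D) * (1 - ((t:ℝ) * (t+1) / 2) / D) := by
        have e1 : ((t:ℝ)+1) / D * (((t:ℝ) * (t+1) / 2) / D) ≥ 0 := by positivity
        have expand : (1 - ((t:ℝ)+1) / D) * (1 - ((t:ℝ) * (t+1) / 2) / D)
            = 1 - ((t:ℝ)+1) / D - ((t:ℝ) * (t+1) / 2) / D
              + ((t:ℝ)+1) / D * (((t:ℝ) * (t+1) / 2) / D) := by ring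
        have e2 : (((t:ℝ)+1) * ((t:ℝ)+1+1) / 2) / D
            = ((t:ℝ)+1) / D + ((t:ℝ) * (t+1) / 2) / D := by
          field_simp
          ring
        rw [expand, e2]
        linarith
      calc (1 - (((t:ℝ)+1) * ((t:ℝ)+1+1) / 2) / D) * Bco q m (jstar q m)
          ≤ ((1 - ((t:ℝ)+1) / D) * (1 - ((t:ℝ) * (t+1) / 2) / D)) * Bco q m (jstar q m) :=
            mul_le_mul_of_nonneg_right hco hM
        _ = (1 - ((t:ℝ)+1) / D) * ((1 - ((t:ℝ) * (t+1) / 2) / D) * Bco q m (jstar q m)) := by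
            ring
        _ ≤ Bco q m (jstar q m + t + 1) := chain

/-- quantitative bound on the mode probability -/
lemma Bco_max_le (hq0 : 0 < q) (hq1 : q < 1) (m : ℕ)
    (h16 : 16 ≤ q * (1-q) * (m+1)) :
    Bco q m (jstar q m) ≤ 4 / Real.sqrt (q * (1-q) * (m+1)) := by
  set D : ℝ := q * (1-q) * (m+1) with hD
  have hq1' : (0:ℝ) < 1 - q := by linarith
  have hDpos : (0:ℝ) < D := by positivity
  have hsD : (0:ℝ) < Real.sqrt D := Real.sqrt_pos.2 hDpos
  set T : ℕ := ⌊Real.sqrt D⌋₊ with hT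
  have hTle : (T:ℝ) ≤ Real.sqrt D := Nat.floor_le hsD.le
  have hTgt : Real.sqrt D < (T:ℝ) + 1 := Nat.lt_floor_add_one _
  have hsq : Real.sqrt D * Real.sqrt D = D := Real.mul_self_sqrt hDpos.le
  have hsD2 : Real.sqrt D ≤ D / 2 := by
    have h4 : Real.sqrt 16 = 4 := by
      rw [show (16:ℝ) = 4^2 by norm_num, Real.sqrt_sq (by norm_num)]
    nlinarith [Real.sq_sqrt hDpos.le, Real.sqrt_le_sqrt h16, Real.sqrt_nonneg D, h4]
  -- for every t ≤ T, Bco q m (j* + t) ≥ M/4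
  have hM := Bco_nonneg hq0 hq1 m (jstar q m)
  have hlow : ∀ t ∈ range (T+1), Bco q m (jstar q m) / 4 ≤ Bco q m (jstar q m + t) := by
    intro t htmem
    rw [mem_range] at htmem
    have htT : (t:ℝ) ≤ (T:ℝ) := by exact_mod_cast Nat.lt_succ_iff.1 htmem
    have hS : (t:ℝ) * (t+1) / 2 ≤ (3/4) * D := by
      have h1 : (t:ℝ) * (t+1) ≤ Real.sqrt D * (Real.sqrt D + 1) := by
        have h2 : (t:ℝ)+1 ≤ Real.sqrt D + 1 := by linarith
        nlinarith [Nat.cast_nonneg (α := ℝ) t]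
      nlinarith
    have hlb := Bco_low hq0 hq1 m t (by linarith)
    have hco : (1/4 : ℝ) ≤ 1 - ((t:ℝ) * (t+1) / 2) / D := by
      have hx : ((t:ℝ) * (t+1) / 2) / D ≤ 3/4 := by
        rw [div_le_iff₀ hDpos]; linarith
      linarith
    calc Bco q m (jstar q m) / 4 = (1/4) * Bco q m (jstar q m) := by ring
      _ ≤ (1 - ((t:ℝ) * (t+1) / 2) / D) * Bco q m (jstar q m) :=
          mul_le_mul_of_nonneg_right hco hM
      _ ≤ Bco q m (jstar q m + t) := hlb
  -- sum bound
  have hsum1 : ∑ t ∈ range (T+1), Bco q m (jstar q m + t) ≤ 1 := by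
    have hre : ∑ t ∈ range (T+1), Bco q m (jstar q m + t)
        = ∑ j ∈ Ico (jstar q m) (jstar q m + (T+1)), Bco q m j := by
      rw [Finset.sum_Ico_eq_sum_range]
      simp
    rw [hre]
    have hsub : Ico (jstar q m) (jstar q m + (T+1)) ⊆ range (max (jstar q m + (T+1)) (m+1)) := by
      intro j hj
      rw [mem_Ico] at hj
      rw [mem_range]
      exact lt_of_lt_of_le hj.2 (le_max_left _ _)
    calc ∑ j ∈ Ico (jstar q m) (jstar q m + (T+1)), Bco q m j
        ≤ ∑ j ∈ range (max (jstar q m + (T+1)) (m+1)), Bco q m j :=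
          Finset.sum_le_sum_of_subset_of_nonneg hsub
            (fun j _ _ => Bco_nonneg hq0 hq1 m j)
      _ = 1 := Bco_sum hq0 hq1 m _ (le_max_right _ _)
  have hcard : ((T:ℝ)+1) * (Bco q m (jstar q m) / 4) ≤ 1 := by
    have := Finset.card_nsmul_le_sum (range (T+1)) (fun t => Bco q m (jstar q m + t))
      (Bco q m (jstar q m) / 4) hlow
    rw [Finset.card_range, nsmul_eq_mul] at this
    push_cast at this
    linarith [hsum1]
  have hT1 : (0:ℝ) < (T:ℝ)+1 := by positivity
  rw [le_div_iff₀ hsD]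
  calc Bco q m (jstar q m) * Real.sqrt D ≤ Bco q m (jstar q m) * ((T:ℝ)+1) :=
        mul_le_mul_of_nonneg_left hTgt.le hM
    _ ≤ 4 := by nlinarith [hcard]

end Binom2
section Binom3
open Finset

variable {q : ℝ}

lemma jstar_le_m (hq0 : 0 < q) (hq1 : q < 1) (m : ℕ) : jstar q m ≤ m := by
  have h : q * ((m:ℝ)+1) < (m:ℝ)+1 := by nlinarith [Nat.cast_nonneg (α := ℝ) m]
  have h2 : jstar q m < m + 1 := by
    unfold jstar
    rw [Nat.floor_lt (by positivity : (0:ℝ) ≤ q * ((m:ℝ)+1))]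
    push_cast
    exact h
  omega

lemma TV_le (hq0 : 0 < q) (hq1 : q < 1) (m : ℕ) :
    ∑ j ∈ range (m+2), |Bco q (m+1) j - Bco q m j|
      ≤ 2 * q * Bco q m (jstar q m) := by
  set J := jstar q m with hJdef
  have hJ : J ≤ m := jstar_le_m hq0 hq1 m
  have habs : ∀ j, |Bco q (m+1) (j+1) - Bco q m (j+1)|
      = q * |Bco q m j - Bco q m (j+1)| := by
    intro j
    have h : Bco q (m+1) (j+1) - Bco q m (j+1)
        = q * (Bco q m j - Bco q m (j+1)) := by
      rw [Bco_pascal hq0 hq1]; ring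
    rw [h, abs_mul, abs_of_pos hq0]
  have habs0 : |Bco q (m+1) 0 - Bco q m 0| = q * Bco q m 0 := by
    have h : Bco q (m+1) 0 - Bco q m 0 = -(q * Bco q m 0) := by
      rw [Bco_pascal_zero hq0 hq1]; ring
    rw [h, abs_neg, abs_of_nonneg (mul_nonneg hq0.le (Bco_nonneg hq0 hq1 m 0))]
  rw [Finset.sum_range_succ' (fun j => |Bco q (m+1) j - Bco q m j|) (m+1), habs0,
    Finset.sum_congr rfl (fun j _ => habs j), ← Finset.mul_sum]
  -- key : the inner sum telescopes to 2 B(J) - B(0)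
  have key : ∑ j ∈ range (m+1), |Bco q m j - Bco q m (j+1)|
      = (Bco q m J - Bco q m 0) + Bco q m J := by
    rw [range_eq_Ico, ← Finset.sum_Ico_consecutive _ (Nat.zero_le J) (by omega : J ≤ m+1)]
    have h1 : ∑ j ∈ Ico 0 J, |Bco q m j - Bco q m (j+1)| = Bco q m J - Bco q m 0 := by
      rw [← range_eq_Ico,
        Finset.sum_congr rfl (fun j hj => ?_), Finset.sum_range_sub (fun j => Bco q m j) J]
      rw [mem_range] at hj
      have hup : Bco q m j ≤ Bco q m (j+1) := by
        apply Bco_mono_up hq0 hq1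
        calc ((j:ℝ)+1) ≤ (J:ℝ) := by exact_mod_cast hj
          _ ≤ q * ((m:ℝ)+1) := jstar_le hq0 m
      rw [abs_sub_comm, abs_of_nonneg (sub_nonneg.2 hup)]
    have h2 : ∑ j ∈ Ico J (m+1), |Bco q m j - Bco q m (j+1)| = Bco q m J := by
      have hc : ∀ j ∈ Ico J (m+1), |Bco q m j - Bco q m (j+1)|
          = Bco q m j - Bco q m (j+1) := by
        intro j hj
        rw [mem_Ico] at hj
        have hdown : Bco q m (j+1) ≤ Bco q m j := by
          apply Bco_mono_down hq0 hq1
          calc q * ((m:ℝ)+1) ≤ (J:ℝ) + 1 := (lt_jstar_add_one q m).le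
            _ ≤ (j:ℝ) + 1 := by
                have : (J:ℝ) ≤ (j:ℝ) := by exact_mod_cast hj.1
                linarith
        exact abs_of_nonneg (sub_nonneg.2 hdown)
      rw [Finset.sum_congr rfl hc, Finset.sum_Ico_eq_sum_range]
      simp only [Nat.add_assoc]
      rw [Finset.sum_range_sub' (fun i => Bco q m (J + i))]
      rw [show J + (m + 1 - J) = m + 1 from by omega, Bco_gt_eq_zero m (m+1) (lt_add_one m)]
      simp
    rw [h1, h2]
  rw [key]
  have hB0 := Bco_nonneg hq0 hq1 m 0
  nlinarith [Bco_nonneg hq0 hq1 m J]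

lemma tendsto_sqrtD (hq0 : 0 < q) (hq1 : q < 1) :
    Tendsto (fun m : ℕ => Real.sqrt (q * (1-q) * ((m:ℝ)+1))) atTop atTop := by
  have hq1' : (0:ℝ) < 1 - q := by linarith
  rw [tendsto_atTop_atTop]
  intro b
  obtain ⟨N, hN⟩ := exists_nat_ge ((max b 0)^2 / (q*(1-q)))
  refine ⟨N, fun m hm => ?_⟩
  have hmN : ((N:ℝ)) ≤ (m:ℝ) := by exact_mod_cast hm
  have hb2 : (max b 0)^2 ≤ q * (1-q) * ((m:ℝ)+1) := by
    rw [div_le_iff₀ (by positivity : (0:ℝ) < q*(1-q))] at hN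
    nlinarith [mul_le_mul_of_nonneg_right hmN (by positivity : (0:ℝ) ≤ q*(1-q))]
  calc b ≤ max b 0 := le_max_left _ _
    _ = Real.sqrt ((max b 0)^2) := (Real.sqrt_sq (le_max_right _ _)).symm
    _ ≤ Real.sqrt (q * (1-q) * ((m:ℝ)+1)) := Real.sqrt_le_sqrt hb2

lemma tendsto_Bco_max (hq0 : 0 < q) (hq1 : q < 1) :
    Tendsto (fun m : ℕ => Bco q m (jstar q m)) atTop (𝓝 0) := by
  have hsq := tendsto_sqrtD hq0 hq1
  have hub : Tendsto (fun m : ℕ => 4 / Real.sqrt (q * (1-q) * ((m:ℝ)+1))) atTop (𝓝 0) := by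
    have := hsq.inv_tendsto_atTop
    have h4 := this.const_mul (4:ℝ)
    simpa [div_eq_mul_inv, mul_zero] using h4
  apply squeeze_zero' (Filter.Eventually.of_forall (fun m => Bco_nonneg hq0 hq1 m _)) _ hub
  have hev : ∀ᶠ m : ℕ in atTop, 16 ≤ q * (1-q) * ((m:ℝ)+1) := by
    have hD : Tendsto (fun m : ℕ => q * (1-q) * ((m:ℝ)+1)) atTop atTop := by
      have h1 : Tendsto (fun m : ℕ => ((m:ℝ)+1)) atTop atTop :=
        tendsto_atTop_add_const_right _ _ tendsto_natCast_atTop_atTop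
      exact h1.const_mul_atTop (by nlinarith)
    exact hD.eventually_ge_atTop 16
  filter_upwards [hev] with m hm
  exact Bco_max_le hq0 hq1 m hm

lemma tendsto_TVB (hq0 : 0 < q) (hq1 : q < 1) :
    Tendsto (fun m : ℕ => ∑ j ∈ range (m+2), |Bco q (m+1) j - Bco q m j|)
      atTop (𝓝 0) := by
  have hub : Tendsto (fun m : ℕ => 2 * q * Bco q m (jstar q m)) atTop (𝓝 0) := by
    have := (tendsto_Bco_max hq0 hq1).const_mul (2*q)
    simpa using this
  apply squeeze_zero' (Filter.Eventually.of_forall (fun m => ?_))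
    (Filter.Eventually.of_forall (fun m => TV_le hq0 hq1 m)) hub
  exact Finset.sum_nonneg (fun j _ => abs_nonneg _)

end Binom3
section Assemble
open Finset

variable [Group G]

lemma mdelta_le_one : ∀ g : G, mdelta g ≤ 1 := by
  intro g; unfold mdelta; split <;> norm_num

lemma summable_mul_bdd {f h : G → ℝ} (hf : Summable f) (hf0 : ∀ a, 0 ≤ f a)
    (hh0 : ∀ a, 0 ≤ h a) (hh1 : ∀ a, h a ≤ 1) : Summable (fun a => f a * h a) := by
  apply Summable.of_nonneg_of_le (fun a => mul_nonneg (hf0 a) (hh0 a)) (fun a => ?_) hf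
  calc f a * h a ≤ f a * 1 := mul_le_mul_of_nonneg_left (hh1 a) (hf0 a)
    _ = f a := mul_one _

/-- splitting a convolution along `ν = (1-q) δ + q ρ` -/
lemma mconv_split {q : ℝ} {ν ρ f : G → ℝ} (hρ : IsProbMeas ρ) (hf : IsProbMeas f)
    (hdec : ∀ g, ν g = (1-q) * mdelta g + q * ρ g) (g : G) :
    mconv f ν g = (1-q) * f g + q * mconv f ρ g := by
  unfold mconv
  have hS1 : Summable (fun a => f a * mdelta (a⁻¹ * g)) :=
    summable_mul_bdd (pm_summable hf) hf.1 (fun a => isProbMeas_mdelta.1 _)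
      (fun a => mdelta_le_one _)
  have hS2 : Summable (fun a => f a * ρ (a⁻¹ * g)) :=
    summable_mul_bdd (pm_summable hf) hf.1 (fun a => hρ.1 _) (fun a => pm_le_one hρ _)
  have hpt : ∀ a : G, f a * ν (a⁻¹ * g)
      = (1-q) * (f a * mdelta (a⁻¹ * g)) + q * (f a * ρ (a⁻¹ * g)) := by
    intro a; rw [hdec]; ring
  rw [tsum_congr hpt, Summable.tsum_add ((hS1.mul_left _)) ((hS2.mul_left _)),
    tsum_mul_left, tsum_mul_left]
  have hdel : ∑' a, f a * mdelta (a⁻¹ * g) = f g := by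
    have := congrFun (mconv_mdelta_right f) g
    exact this
  rw [hdel]

/-- binomial expansion of powers of `ν = (1-q) δ + q ρ` -/
lemma convPow_expand {q : ℝ} (hq0 : 0 < q) (hq1 : q < 1) {ν ρ : G → ℝ}
    (hν : IsProbMeas ν) (hρ : IsProbMeas ρ)
    (hdec : ∀ g, ν g = (1-q) * mdelta g + q * ρ g) (m : ℕ) (g : G) :
    convPow ν m g = ∑ j ∈ range (m+1), Bco q m j * convPow ρ j g := by
  induction m generalizing g with
  | zero => simp [Bco, convPow_zero]
  | succ m ih =>
      have hprob : IsProbMeas (convPow ν m) := isProbMeas_convPow hν m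
      have hstep : convPow ν (m+1) g
          = (1-q) * convPow ν m g + q * mconv (convPow ν m) ρ g := by
        rw [convPow_succ]
        exact mconv_split hρ hprob hdec g
      have hmix : mconv (convPow ν m) ρ g
          = ∑ j ∈ range (m+1), Bco q m j * convPow ρ (j+1) g := by
        unfold mconv
        have hpt : ∀ a : G, convPow ν m a * ρ (a⁻¹ * g)
            = ∑ j ∈ range (m+1), Bco q m j * (convPow ρ j a * ρ (a⁻¹ * g)) := by
          intro a
          rw [ih a, Finset.sum_mul]
          exact Finset.sum_congr rfl (fun j _ => by ring)
        rw [tsum_congr hpt, Summable.tsum_finsetSum (fun j _ => ?_)]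
        · refine Finset.sum_congr rfl (fun j _ => ?_)
          rw [tsum_mul_left]
          rfl
        · exact (summable_mul_bdd (pm_summable (isProbMeas_convPow hρ j))
            (isProbMeas_convPow hρ j).1 (fun a => hρ.1 _)
            (fun a => pm_le_one hρ _)).mul_left _
      rw [hstep, hmix, ih g]
      -- now pure algebra with binomial coefficients
      set x : ℕ → ℝ := fun j => convPow ρ j g with hx
      have e2 : ∑ j ∈ range (m+2), Bco q m j * x j
          = ∑ j ∈ range (m+1), Bco q m (j+1) * x (j+1) + Bco q m 0 * x 0 :=
        Finset.sum_range_succ' (fun j => Bco q m j * x j) (m+1)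
      have e1 : ∑ j ∈ range (m+2), Bco q m j * x j
          = ∑ j ∈ range (m+1), Bco q m j * x j := by
        rw [Finset.sum_range_succ, Bco_gt_eq_zero m (m+1) (lt_add_one m)]
        simp
      have e3 : ∑ j ∈ range (m+1+1), Bco q (m+1) j * x j
          = ∑ j ∈ range (m+1), Bco q (m+1) (j+1) * x (j+1) + Bco q (m+1) 0 * x 0 :=
        Finset.sum_range_succ' (fun j => Bco q (m+1) j * x j) (m+1)
      rw [e3, Bco_pascal_zero hq0 hq1,
        Finset.sum_congr rfl (fun j _ => by rw [Bco_pascal hq0 hq1] : 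
          ∀ j ∈ range (m+1), Bco q (m+1) (j+1) * x (j+1)
            = ((1-q) * Bco q m (j+1) + q * Bco q m j) * x (j+1))]
      have expand : ∑ j ∈ range (m+1), ((1-q) * Bco q m (j+1) + q * Bco q m j) * x (j+1)
          = (1-q) * (∑ j ∈ range (m+1), Bco q m (j+1) * x (j+1))
            + q * (∑ j ∈ range (m+1), Bco q m j * x (j+1)) := by
        rw [Finset.mul_sum, Finset.mul_sum, ← Finset.sum_add_distrib]
        exact Finset.sum_congr rfl (fun j _ => by ring)
      rw [expand]
      have e4 : ∑ j ∈ range (m+1), Bco q m (j+1) * x (j+1)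
          = ∑ j ∈ range (m+1), Bco q m j * x j - Bco q m 0 * x 0 := by
        rw [← e1, e2]; ring
      rw [e4]
      ring

end Assemble

section Final
open Finset

variable [Group G]

lemma convPow_convPow {μ : G → ℝ} (h : IsProbMeas μ) (k m : ℕ) :
    convPow (convPow μ k) m = convPow μ (k * m) := by
  induction m with
  | zero => rfl
  | succ m ih => rw [convPow_succ, ih, Nat.mul_succ, convPow_add h]

lemma key_bound {q : ℝ} (hq0 : 0 < q) (hq1 : q < 1) {μ ν ρ : G → ℝ}
    (hμ : IsProbMeas μ) (hν : IsProbMeas ν) (hρ : IsProbMeas ρ)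
    (hdec : ∀ g, ν g = (1-q) * mdelta g + q * ρ g)
    (k : ℕ) (hνk : ν = convPow μ k) (n : ℕ) :
    ∑' g : G, |convPow μ (n + k) g - convPow μ n g|
      ≤ ∑ j ∈ range ((n/k)+2), |Bco q ((n/k)+1) j - Bco q (n/k) j| := by
  set m := n / k with hmdef
  set r := n % k with hrdef
  have hn : n = r + k * m := by rw [hrdef, hmdef]; exact (Nat.mod_add_div n k).symm
  have hnk : n + k = r + k * (m+1) := by rw [Nat.mul_succ, ← Nat.add_assoc, ← hn]
  set σ : ℕ → G → ℝ := fun j => mconv (convPow μ r) (convPow ρ j) with hσdef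
  have hσ : ∀ j, IsProbMeas (σ j) := fun j =>
    isProbMeas_mconv (isProbMeas_convPow hμ r) (isProbMeas_convPow hρ j)
  have hrep : ∀ (M : ℕ) (g : G), convPow μ (r + k * M) g
      = ∑ j ∈ range (M+1), Bco q M j * σ j g := by
    intro M g
    rw [convPow_add hμ r (k*M), ← convPow_convPow hμ k M, ← hνk]
    show mconv (convPow μ r) (convPow ν M) g = _
    unfold mconv
    have hpt : ∀ a : G, convPow μ r a * convPow ν M (a⁻¹ * g)
        = ∑ j ∈ range (M+1), Bco q M j * (convPow μ r a * convPow ρ j (a⁻¹ * g)) := by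
      intro a
      rw [convPow_expand hq0 hq1 hν hρ hdec M (a⁻¹ * g), Finset.mul_sum]
      exact sum_congr rfl fun j _ => by ring
    rw [tsum_congr hpt, Summable.tsum_finsetSum (fun j _ => Summable.mul_left _
      (summable_mul_bdd (pm_summable (isProbMeas_convPow hμ r)) (isProbMeas_convPow hμ r).1
        (fun a => (isProbMeas_convPow hρ j).1 _)
        (fun a => pm_le_one (isProbMeas_convPow hρ j) _)))]
    exact sum_congr rfl fun j _ => by rw [tsum_mul_left]; rfl
  have hpw : ∀ g : G, |convPow μ (n+k) g - convPow μ n g|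
      ≤ ∑ j ∈ range (m+2), |Bco q (m+1) j - Bco q m j| * σ j g := by
    intro g
    rw [hnk, hrep (m+1) g, hn, hrep m g]
    have ext : ∑ j ∈ range (m+1), Bco q m j * σ j g
        = ∑ j ∈ range (m+2), Bco q m j * σ j g := by
      rw [Finset.sum_range_succ (fun j => Bco q m j * σ j g) (m+1),
        Bco_gt_eq_zero m (m+1) (lt_add_one m)]
      simp
    rw [ext, ← Finset.sum_sub_distrib]
    calc |∑ j ∈ range (m+2), (Bco q (m+1) j * σ j g - Bco q m j * σ j g)|
        ≤ ∑ j ∈ range (m+2), |Bco q (m+1) j * σ j g - Bco q m j * σ j g| :=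
          Finset.abs_sum_le_sum_abs _ _
      _ = ∑ j ∈ range (m+2), |Bco q (m+1) j - Bco q m j| * σ j g := by
          refine sum_congr rfl fun j _ => ?_
          rw [show Bco q (m+1) j * σ j g - Bco q m j * σ j g
            = (Bco q (m+1) j - Bco q m j) * σ j g from by ring, abs_mul,
            abs_of_nonneg ((hσ j).1 g)]
  have hsumR : Summable (fun g : G => ∑ j ∈ range (m+2),
      |Bco q (m+1) j - Bco q m j| * σ j g) :=
    summable_sum (fun j _ => (pm_summable (hσ j)).mul_left _)
  have hsumL : Summable (fun g : G => |convPow μ (n+k) g - convPow μ n g|) :=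
    Summable.of_nonneg_of_le (fun g => abs_nonneg _) hpw hsumR
  calc ∑' g : G, |convPow μ (n+k) g - convPow μ n g|
      ≤ ∑' g : G, ∑ j ∈ range (m+2), |Bco q (m+1) j - Bco q m j| * σ j g :=
        Summable.tsum_le_tsum hpw hsumL hsumR
    _ = ∑ j ∈ range (m+2), ∑' g : G, |Bco q (m+1) j - Bco q m j| * σ j g :=
        Summable.tsum_finsetSum (fun j _ => (pm_summable (hσ j)).mul_left _)
    _ = ∑ j ∈ range (m+2), |Bco q (m+1) j - Bco q m j| := by
        refine sum_congr rfl fun j _ => ?_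
        rw [tsum_mul_left, pm_tsum (hσ j), mul_one]

lemma tendsto_div_const_atTop (k : ℕ) (hk : 1 ≤ k) :
    Tendsto (fun n : ℕ => n / k) atTop atTop := by
  rw [tendsto_atTop_atTop]
  intro b
  exact ⟨b * k, fun n hn => (Nat.le_div_iff_mul_le hk).2 hn⟩

end Final


/-- For an irreducible probability measure `μ` on a discrete group `G`,
there is `k ≥ 1` with `‖μ^{⋆(n+k)} − μ^{⋆n}‖₁ → 0` as `n → ∞`. -/
theorem zero_two_law [Group G] (μ : G → ℝ)
    (hμ : IsProbMeas μ) (hirr : MeasIrreducible μ) :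
    ∃ k : ℕ, 1 ≤ k ∧
      Tendsto (fun n : ℕ => ∑' g : G, |convPow μ (n + k) g - convPow μ n g|) atTop (𝓝 0) := by
  obtain ⟨k, hk1, hkpos⟩ := hirr 1
  refine ⟨k, hk1, ?_⟩
  set ν : G → ℝ := convPow μ k with hν
  have hνp : IsProbMeas ν := isProbMeas_convPow hμ k
  rcases eq_or_lt_of_le (pm_le_one hνp 1) with hc1 | hc1
  · -- degenerate case : ν = δ
    have hdelta : ν = mdelta := by
      funext g
      by_cases hg : g = 1
      · rw [hg, hc1]; simp [mdelta]
      · have hpair : ν 1 + ν g ≤ 1 := by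
          have hs := Summable.sum_le_tsum ({1, g} : Finset G)
            (fun i _ => hνp.1 i) (pm_summable hνp)
          rwa [pm_tsum hνp, Finset.sum_pair (Ne.symm hg)] at hs
        have h0 : ν g ≤ 0 := by rw [hc1] at hpair; linarith
        have h1 := hνp.1 g
        simp [mdelta, hg]
        linarith
    have hzero : ∀ n, convPow μ (n + k) = convPow μ n := by
      intro n
      rw [convPow_add hμ n k, ← hν, hdelta, mconv_mdelta_right]
    have heq : (fun n : ℕ => ∑' g : G, |convPow μ (n + k) g - convPow μ n g|)
        = fun _ => (0:ℝ) := by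
      funext n; rw [hzero n]; simp
    rw [heq]
    exact tendsto_const_nhds
  · -- main case
    set q : ℝ := 1 - ν 1 with hqdef
    have hq0 : 0 < q := by rw [hqdef]; linarith
    have hq1 : q < 1 := by
      rw [hqdef]
      have : (0:ℝ) < ν 1 := hkpos
      linarith
    set ρ : G → ℝ := fun g => (ν g - (1-q) * mdelta g) * q⁻¹ with hρdef
    have hρ : IsProbMeas ρ := by
      constructor
      · intro g
        by_cases hg : g = 1
        · have : ρ g = 0 := by
            rw [hρdef]; simp [hg, mdelta, hqdef]
          rw [this]
        · rw [hρdef]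
          simp only [mdelta, hg, if_false, mul_zero, sub_zero]
          exact mul_nonneg (hνp.1 g) (by positivity)
      · have h1 : HasSum (fun g : G => ν g - (1-q) * mdelta g) (1 - (1-q) * 1) :=
          hνp.2.sub ((isProbMeas_mdelta.2).mul_left (1-q))
        have h2 := h1.mul_right q⁻¹
        have : (1 - (1-q) * 1) * q⁻¹ = 1 := by field_simp; ring
        rwa [this] at h2
    have hdec : ∀ g, ν g = (1-q) * mdelta g + q * ρ g := by
      intro g
      rw [hρdef]
      field_simp
      ring
    have hbound := key_bound hq0 hq1 hμ hνp hρ hdec k hν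
    have hub : Tendsto (fun n : ℕ => ∑ j ∈ Finset.range ((n/k)+2),
        |Bco q ((n/k)+1) j - Bco q (n/k) j|) atTop (𝓝 0) :=
      (tendsto_TVB hq0 hq1).comp (tendsto_div_const_atTop k hk1)
    apply squeeze_zero' (Filter.Eventually.of_forall (fun n =>
        tsum_nonneg (fun g => abs_nonneg _)))
      (Filter.Eventually.of_forall hbound) hub
end

section
/- Let G be an infinite discrete group, let μ be an irreducible probability measure on G, and let ν : G → [0,∞) be a summable function (ν ∈ ℓ¹(G), ν ≥ 0) satisfying ν ⋆ μ = ν, where (ν⋆μ)({g}) = Σ_{a·b=g} ν({a})μ({b}). Then ν = 0. -/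
open Filter Topology
open scoped Classical

variable {G : Type*}

lemma convPow_nonneg [Group G] {μ : G → ℝ} (hμ : ∀ g, 0 ≤ μ g) :
    ∀ n g, 0 ≤ convPow μ n g := by
  intro n
  induction n with
  | zero => intro g; simp only [convPow]; positivity
  | succ n ih =>
      intro g
      refine tsum_nonneg fun a => mul_nonneg (ih a) (hμ _)

lemma convPow_succ_pos_exists [Group G] {μ : G → ℝ} (hμ : ∀ g, 0 ≤ μ g)
    {n : ℕ} {x : G} (hx : 0 < convPow μ (n+1) x) :
    ∃ c : G, 0 < convPow μ n c ∧ 0 < μ (c⁻¹ * x) := by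
  by_contra hc
  push_neg at hc
  have hz : (fun c : G => convPow μ n c * μ (c⁻¹ * x)) = fun _ => 0 := by
    funext c
    rcases lt_or_eq_of_le (convPow_nonneg hμ n c) with hpos | heq
    · have := hc c hpos
      have : μ (c⁻¹ * x) = 0 := le_antisymm this (hμ _)
      simp [this]
    · simp [← heq]
  have : convPow μ (n+1) x = 0 := by
    simp only [convPow, mconv, hz, tsum_zero]
  linarith

lemma hasSum_shift_s6 [Group G] {μ : G → ℝ} (hμ : HasSum μ 1) (g : G) :
    HasSum (fun a : G => μ (a⁻¹ * g)) 1 := by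
  have := (Equiv.hasSum_iff ((Equiv.inv G).trans (Equiv.mulRight g))).mpr hμ
  simpa [Function.comp_def] using this

/-- On an infinite discrete group, a non-negative summable `ν` which is
`μ`-stationary (`ν ⋆ μ = ν`) for an irreducible probability measure `μ` must vanish. -/
theorem stationary_vanishes [Group G] [Infinite G] (μ : G → ℝ)
    (hμ : IsProbMeas μ) (hirr : MeasIrreducible μ)
    (ν : G → ℝ) (hν0 : ∀ g, 0 ≤ ν g) (hνs : Summable ν)
    (h : mconv ν μ = ν) :
    ν = 0 := by
  by_contra hne
  -- a point where ν is positive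
  obtain ⟨g₁, hg₁⟩ : ∃ g, ν g ≠ 0 := by
    by_contra hc; push_neg at hc; exact hne (funext fun g => hc g)
  have hg₁pos : 0 < ν g₁ := lt_of_le_of_ne (hν0 g₁) (Ne.symm hg₁)
  -- the set where ν ≥ ν g₁ is finite
  have hfin : {g : G | ν g₁ ≤ ν g}.Finite := by
    have h1 : ∀ᶠ x in 𝓝 (0:ℝ), x < ν g₁ := eventually_lt_nhds hg₁pos
    have h2 : ∀ᶠ g in cofinite, ν g < ν g₁ := hνs.tendsto_cofinite_zero.eventually h1
    have := Filter.eventually_cofinite.mp h2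
    convert this using 1
    ext g; simp [not_lt]
  -- the maximum point g₀
  obtain ⟨g₀, hg₀mem, hg₀max'⟩ :=
    hfin.toFinset.exists_max_image ν ⟨g₁, by simp [hfin.mem_toFinset]⟩
  have hg₁mem : ν g₁ ≤ ν g₀ := hg₀max' g₁ (by simp [hfin.mem_toFinset])
  have hmax : ∀ g, ν g ≤ ν g₀ := by
    intro g
    by_cases hg : ν g₁ ≤ ν g
    · exact hg₀max' g (by simpa [hfin.mem_toFinset] using hg)
    · exact le_trans (le_of_lt (lt_of_not_ge hg)) hg₁mem
  have hMpos : 0 < ν g₀ := lt_of_lt_of_le hg₁pos hg₁mem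
  have hμle : ∀ x, μ x ≤ 1 := fun x => le_hasSum hμ.2 x fun j _ => hμ.1 j
  -- one-step maximum principle
  have key : ∀ g, ν g = ν g₀ → ∀ b, 0 < μ (b⁻¹ * g) → ν b = ν g₀ := by
    intro g hg b hb
    by_contra hbne
    have hblt : ν b < ν g₀ := lt_of_le_of_ne (hmax b) hbne
    have hs1 : HasSum (fun a : G => μ (a⁻¹ * g)) 1 := hasSum_shift_s6 hμ.2 g
    have hsf : Summable (fun a : G => ν a * μ (a⁻¹ * g)) := by
      refine Summable.of_nonneg_of_le (fun a => mul_nonneg (hν0 a) (hμ.1 _))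
        (fun a => ?_) hνs
      calc ν a * μ (a⁻¹ * g) ≤ ν a * 1 :=
            mul_le_mul_of_nonneg_left (hμle _) (hν0 a)
        _ = ν a := mul_one _
    have hsg : Summable (fun a : G => ν g₀ * μ (a⁻¹ * g)) := hs1.summable.mul_left _
    have hlt : ∑' a, ν a * μ (a⁻¹ * g) < ∑' a, ν g₀ * μ (a⁻¹ * g) := by
      refine Summable.tsum_lt_tsum (i := b)
        (fun a => mul_le_mul_of_nonneg_right (hmax a) (hμ.1 _)) ?_ hsf hsg
      exact mul_lt_mul_of_pos_right hblt hb
    have heq : ν g = ∑' a, ν a * μ (a⁻¹ * g) := by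
      conv_lhs => rw [← h]
      rfl
    have hR : ∑' a, ν g₀ * μ (a⁻¹ * g) = ν g₀ := by
      rw [(hs1.mul_left (ν g₀)).tsum_eq, mul_one]
    rw [← heq, hR, hg] at hlt
    exact lt_irrefl _ hlt
  -- induction: all points charged by some convolution power from a max point are max points
  have main : ∀ n : ℕ, ∀ g, ν g = ν g₀ → ∀ b, 0 < convPow μ n (b⁻¹ * g) → ν b = ν g₀ := by
    intro n
    induction n with
    | zero =>
        intro g hg b hb
        simp only [convPow] at hb
        by_cases hbg : b⁻¹ * g = 1
        · rw [show b = g from inv_mul_eq_one.mp hbg]; exact hg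
        · simp [hbg] at hb
    | succ n ih =>
        intro g hg b hb
        obtain ⟨c, hc1, hc2⟩ := convPow_succ_pos_exists hμ.1 hb
        have ha : ν (b * c) = ν g₀ :=
          key g hg (b * c) (by simpa [mul_inv_rev, mul_assoc] using hc2)
        refine ih (b * c) ha b ?_
        simpa using hc1
  have hall : ∀ b, ν b = ν g₀ := by
    intro b
    obtain ⟨n, _, hpos⟩ := hirr (b⁻¹ * g₀)
    exact main n g₀ rfl b hpos
  -- ν is a positive constant on an infinite group: contradicts summability
  have hconst : Tendsto (fun _ : G => ν g₀) cofinite (𝓝 0) := by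
    have ht := hνs.tendsto_cofinite_zero
    have : ν = fun _ : G => ν g₀ := funext hall
    rwa [this] at ht
  have : ν g₀ = 0 := tendsto_nhds_unique tendsto_const_nhds hconst
  linarith
end
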